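/- For all constants C_E ≥ 1, L ≥ 0, M ≥ 0, K ≥ 0 there exists C ≥ 0 such that the following holds. Let E be a real Banach space, A : E →L[ℝ] E with ‖exp(-tA)‖ ≤ C_E for all t ≥ 0, let g : E → E be Lipschitz with constant L and satisfy ‖g(x)‖ ≤ M for all x ∈ E, let 0 < h ≤ 1, and let u : ℝ → E be differentiable on [0,h] with u'(t) = -A(u t) + g(u t) on [0,h], u 0 = u₀. Assume the map σ ↦ exp(-(1-σ)hA)( g(exp(-σhA) u₀) ) is Lipschitz on [0,1] with constant K·h. Then the local error of the Lawson–Euler method satisfies ‖u(h) - exp(-hA)(u₀ + h • g(u₀))‖ ≤ C · h². -/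

import Mathlib

/-- The operator exponential `exp(tA)` of a continuous linear operator. -/
noncomputable def opexp {E : Type*} [NormedAddCommGroup E] [NormedSpace ℝ E]
    [CompleteSpace E] (A : E →L[ℝ] E) (t : ℝ) : E →L[ℝ] E :=
  NormedSpace.exp (t • A)

section aux

variable {E : Type*} [NormedAddCommGroup E] [NormedSpace ℝ E] [CompleteSpace E] (A : E →L[ℝ] E)

lemma opexp_zero' : opexp A 0 = 1 := by
  simp [opexp, NormedSpace.exp_zero]

lemma opexp_add' (s t : ℝ) : opexp A (s + t) = opexp A s * opexp A t := by
  rw [opexp, add_smul]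
  letI : NormedAlgebra ℚ (E →L[ℝ] E) := NormedAlgebra.restrictScalars ℚ ℝ (E →L[ℝ] E)
  refine NormedSpace.exp_add_of_commute ?_
  unfold Commute SemiconjBy
  simp [smul_mul_assoc, mul_smul_comm, smul_comm s t]

lemma opexp_apply_apply' (s t : ℝ) (x : E) : opexp A s (opexp A t x) = opexp A (s + t) x := by
  rw [opexp_add']; rfl

lemma hasDerivAt_opexp' (t : ℝ) :
    HasDerivAt (fun s => opexp A s) (opexp A t * A) t :=
  hasDerivAt_exp_smul_const (𝕂 := ℝ) A t

lemma opexp_inv' (t : ℝ) (x : E) : opexp A (-t) (opexp A t x) = x := by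
  rw [opexp_apply_apply']; simp [opexp_zero']

end aux

/-- Order theorem for Lawson methods (Theorem 4.5, case `p = 1`): if the integrand
`σ ↦ exp(-(1-σ)hA) g(exp(-σhA)u₀)` is Lipschitz on `[0,1]` with constant `K·h`, then the
local error of the Lawson–Euler method is `O(h²)` uniformly in `A`. -/
theorem stmt_15 (C_E L M K : ℝ) (hCE : 1 ≤ C_E) (hL : 0 ≤ L) (hM : 0 ≤ M) (hK : 0 ≤ K) :
    ∃ C : ℝ, 0 ≤ C ∧
      ∀ (E : Type) [NormedAddCommGroup E] [NormedSpace ℝ E] [CompleteSpace E]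
        (A : E →L[ℝ] E),
        (∀ t : ℝ, 0 ≤ t → ‖opexp A (-t)‖ ≤ C_E) →
        ∀ g : E → E, LipschitzWith (Real.toNNReal L) g →
          (∀ x : E, ‖g x‖ ≤ M) →
        ∀ h : ℝ, 0 < h → h ≤ 1 →
        ∀ (u : ℝ → E) (u₀ : E),
          (∀ t ∈ Set.Icc (0 : ℝ) h, HasDerivAt u (-(A (u t)) + g (u t)) t) →
          u 0 = u₀ →
          LipschitzOnWith (Real.toNNReal (K * h))
            (fun σ : ℝ => opexp A (-((1 - σ) * h)) (g (opexp A (-(σ * h)) u₀)))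
            (Set.Icc (0 : ℝ) 1) →
          ‖u h - opexp A (-h) (u₀ + h • g u₀)‖ ≤ C * h ^ 2 := by
  refine ⟨C_E ^ 2 * L * M + K, by positivity, ?_⟩
  intro E _ _ _ A hA g hg hgM h hh0 hh1 u u₀ hu hu0 hΨ
  have hCE0 : (0:ℝ) < C_E := lt_of_lt_of_le one_pos hCE
  -- derivative of w t = exp(tA) (u t)
  have hw : ∀ t ∈ Set.Icc (0:ℝ) h,
      HasDerivAt (fun t => opexp A t (u t)) (opexp A t (g (u t))) t := by
    intro t ht
    have h1 := (hasDerivAt_opexp' A t).clm_apply (hu t ht)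
    convert h1 using 1
    rw [ContinuousLinearMap.mul_apply, map_add, map_neg]
    abel
  -- continuity facts
  have hucont : ContinuousOn u (Set.Icc 0 h) := fun t ht =>
    (hu t ht).continuousAt.continuousWithinAt
  have hopc : Continuous fun s : ℝ => opexp A s :=
    continuous_iff_continuousAt.2 fun t => (hasDerivAt_opexp' A t).continuousAt
  have hfc : ContinuousOn (fun s => opexp A s (g (u s))) (Set.Icc 0 h) :=
    hopc.continuousOn.clm_apply (hg.continuous.comp_continuousOn hucont)
  -- fundamental theorem of calculus on [0,s]
  have key : ∀ s ∈ Set.Icc (0:ℝ) h,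
      (∫ τ in (0:ℝ)..s, opexp A τ (g (u τ))) = opexp A s (u s) - u₀ := by
    intro s hs
    have hsub : Set.Icc (0:ℝ) s ⊆ Set.Icc 0 h :=
      Set.Icc_subset_Icc le_rfl hs.2
    have hint : IntervalIntegrable (fun τ => opexp A τ (g (u τ))) MeasureTheory.volume 0 s := by
      refine ContinuousOn.intervalIntegrable ?_
      rw [Set.uIcc_of_le hs.1]; exact hfc.mono hsub
    have := intervalIntegral.integral_eq_sub_of_hasDerivAt
      (f := fun t => opexp A t (u t)) (f' := fun t => opexp A t (g (u t)))
      (fun t ht => hw t (hsub (by rwa [Set.uIcc_of_le hs.1] at ht))) hint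
    rw [this]
    simp [opexp_zero', hu0]
  have hint_h : IntervalIntegrable (fun s => opexp A s (g (u s))) MeasureTheory.volume 0 h := by
    refine ContinuousOn.intervalIntegrable ?_
    rw [Set.uIcc_of_le hh0.le]; exact hfc
  -- bound on ‖u s - exp(-sA) u₀‖
  have hbound_u : ∀ s ∈ Set.Icc (0:ℝ) h, ‖u s - opexp A (-s) u₀‖ ≤ C_E * M * h := by
    intro s hs
    have hsub : Set.Icc (0:ℝ) s ⊆ Set.Icc 0 h := Set.Icc_subset_Icc le_rfl hs.2
    have hint : IntervalIntegrable (fun τ => opexp A τ (g (u τ))) MeasureTheory.volume 0 s := by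
      refine ContinuousOn.intervalIntegrable ?_
      rw [Set.uIcc_of_le hs.1]; exact hfc.mono hsub
    have e1 : u s - opexp A (-s) u₀
        = ∫ τ in (0:ℝ)..s, opexp A (-s) (opexp A τ (g (u τ))) := by
      rw [(opexp A (-s)).intervalIntegral_comp_comm hint, key s hs, map_sub, opexp_inv']
    rw [e1]
    have hb : ∀ τ ∈ Set.uIoc (0:ℝ) s, ‖opexp A (-s) (opexp A τ (g (u τ)))‖ ≤ C_E * M := by
      intro τ hτ
      rw [Set.uIoc_of_le hs.1] at hτ
      rw [opexp_apply_apply']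
      have : -s + τ = -(s - τ) := by ring
      rw [this]
      calc ‖opexp A (-(s - τ)) (g (u τ))‖ ≤ ‖opexp A (-(s - τ))‖ * ‖g (u τ)‖ :=
            ContinuousLinearMap.le_opNorm _ _
        _ ≤ C_E * M := mul_le_mul (hA _ (by linarith [hτ.2])) (hgM _)
            (norm_nonneg _) hCE0.le
    calc ‖∫ τ in (0:ℝ)..s, opexp A (-s) (opexp A τ (g (u τ)))‖ ≤ C_E * M * |s - 0| :=
          intervalIntegral.norm_integral_le_of_norm_le_const hb
      _ ≤ C_E * M * h := by
          rw [sub_zero, abs_of_nonneg hs.1]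
          exact mul_le_mul_of_nonneg_left hs.2 (by positivity)
  -- error representation
  have hrep : u h - opexp A (-h) (u₀ + h • g u₀)
      = ∫ s in (0:ℝ)..h, (opexp A (s - h) (g (u s)) - opexp A (-h) (g u₀)) := by
    have e0 : ∀ s : ℝ, opexp A (s - h) (g (u s)) - opexp A (-h) (g u₀)
        = opexp A (-h) (opexp A s (g (u s)) - g u₀) := by
      intro s
      rw [map_sub, opexp_apply_apply']
      ring_nf
    simp_rw [e0]
    rw [(opexp A (-h)).intervalIntegral_comp_comm (hint_h.sub intervalIntegrable_const),
      intervalIntegral.integral_sub hint_h intervalIntegrable_const,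
      key h (Set.mem_Icc.2 ⟨hh0.le, le_rfl⟩), intervalIntegral.integral_const]
    rw [map_sub, map_sub, opexp_inv', map_add]
    rw [sub_zero]
    abel
  -- pointwise bound of the integrand
  have hpt : ∀ s ∈ Set.uIoc (0:ℝ) h,
      ‖opexp A (s - h) (g (u s)) - opexp A (-h) (g u₀)‖ ≤ (C_E ^ 2 * L * M + K) * h := by
    intro s hs'
    rw [Set.uIoc_of_le hh0.le] at hs'
    have hs : s ∈ Set.Icc (0:ℝ) h := ⟨hs'.1.le, hs'.2⟩
    set v : E := opexp A (-s) u₀ with hv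
    have hA' : ‖opexp A (s - h)‖ ≤ C_E := by
      have : s - h = -(h - s) := by ring
      rw [this]; exact hA _ (by linarith [hs.2])
    -- term A
    have htA : ‖opexp A (s - h) (g (u s)) - opexp A (s - h) (g v)‖
        ≤ C_E ^ 2 * L * M * h := by
      rw [← map_sub]
      calc ‖opexp A (s - h) (g (u s) - g v)‖ ≤ ‖opexp A (s - h)‖ * ‖g (u s) - g v‖ :=
            ContinuousLinearMap.le_opNorm _ _
        _ ≤ C_E * (L * ‖u s - v‖) := by
            apply mul_le_mul hA' ?_ (norm_nonneg _) hCE0.le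
            have := hg.dist_le_mul (u s) v
            rwa [dist_eq_norm, dist_eq_norm, Real.coe_toNNReal L hL] at this
        _ ≤ C_E * (L * (C_E * M * h)) := by
            apply mul_le_mul_of_nonneg_left (mul_le_mul_of_nonneg_left
              (hbound_u s hs) hL) hCE0.le
        _ = C_E ^ 2 * L * M * h := by ring
    -- term B : Lipschitz continuity of Ψ
    have htB : ‖opexp A (s - h) (g v) - opexp A (-h) (g u₀)‖ ≤ K * h := by
      have hmem : s / h ∈ Set.Icc (0:ℝ) 1 :=
        ⟨div_nonneg hs.1 hh0.le, (div_le_one hh0).2 hs.2⟩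
      have h0mem : (0:ℝ) ∈ Set.Icc (0:ℝ) 1 := ⟨le_rfl, zero_le_one⟩
      have hd := hΨ.dist_le_mul (s / h) hmem 0 h0mem
      have e1 : -((1 - s / h) * h) = s - h := by field_simp; ring
      have e2 : -(s / h * h) = -s := by field_simp
      have e3 : -((1 - (0:ℝ)) * h) = -h := by ring
      have e4 : opexp A (-((0:ℝ) * h)) u₀ = u₀ := by norm_num [opexp_zero']
      simp only [e1, e2, e3, e4] at hd
      rw [Real.coe_toNNReal (K * h) (by positivity), Real.dist_eq, sub_zero,
        abs_of_nonneg (div_nonneg hs.1 hh0.le)] at hd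
      rw [dist_eq_norm] at hd
      calc ‖opexp A (s - h) (g v) - opexp A (-h) (g u₀)‖ ≤ K * h * (s / h) := hd
        _ ≤ K * h * 1 := by
            apply mul_le_mul_of_nonneg_left ((div_le_one hh0).2 hs.2) (by positivity)
        _ = K * h := by ring
    calc ‖opexp A (s - h) (g (u s)) - opexp A (-h) (g u₀)‖
        ≤ ‖opexp A (s - h) (g (u s)) - opexp A (s - h) (g v)‖
          + ‖opexp A (s - h) (g v) - opexp A (-h) (g u₀)‖ := by
          have := dist_triangle (opexp A (s - h) (g (u s))) (opexp A (s - h) (g v))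
            (opexp A (-h) (g u₀))
          simpa [dist_eq_norm] using this
      _ ≤ C_E ^ 2 * L * M * h + K * h := add_le_add htA htB
      _ = (C_E ^ 2 * L * M + K) * h := by ring
  rw [hrep]
  calc ‖∫ s in (0:ℝ)..h, (opexp A (s - h) (g (u s)) - opexp A (-h) (g u₀))‖
      ≤ (C_E ^ 2 * L * M + K) * h * |h - 0| :=
        intervalIntegral.norm_integral_le_of_norm_le_const hpt
    _ = (C_E ^ 2 * L * M + K) * h ^ 2 := by
        rw [sub_zero, abs_of_nonneg hh0.le]; ring
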